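/- Let A be a unital C*-algebra and B ⊆ A a finite-dimensional unital C*-subalgebra. Then the map E_B : A → A defined by E_B(x) = ∫_{U(B)} u x u* dμ_B(u), with μ_B the normalized Haar measure on the compact group U(B), is a conditional expectation onto the relative commutant B' ∩ A, and satisfies ‖a − E_B(a)‖ ≤ max_{x ∈ Ball(B)} ‖ax − xa‖ for all a ∈ A. -/

import Mathlib

set_option synthInstance.maxHeartbeats 1000000
set_option maxHeartbeats 2000000

open Filter Topology
open MeasureTheory

section UnitarySpan

/-- In a nontrivial unital C*-algebra, every element lies in the `ℂ`-span of the unitaries. -/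
lemma mem_span_unitary {C : Type*} [CStarAlgebra C] [Nontrivial C] (b : C) :
    b ∈ Submodule.span ℂ ((unitary C : Set C)) := by
  set S := Submodule.span ℂ ((unitary C : Set C)) with hS
  have hsa : ∀ c : C, IsSelfAdjoint c → ‖c‖ ≤ 1 → c ∈ S := by
    intro d hd hd1
    haveI : IsStarNormal d := hd.isStarNormal
    set f : ℂ → ℂ := fun z => (z.re : ℂ) + Complex.I * (Real.sqrt (1 - z.re ^ 2) : ℝ) with hf
    have hfc : Continuous f := by
      apply Continuous.add
      · exact Complex.continuous_ofReal.comp Complex.continuous_re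
      · exact continuous_const.mul (Complex.continuous_ofReal.comp
          (Real.continuous_sqrt.comp (continuous_const.sub
            (Complex.continuous_re.pow 2))))
    have hsq : ∀ z ∈ spectrum ℂ d, z.re ^ 2 ≤ 1 := by
      intro z hz
      have h1 : z = (z.re : ℂ) := hd.mem_spectrum_eq_re hz
      have h2 : ‖z‖ ≤ ‖d‖ := spectrum.norm_le_norm_of_mem hz
      have h3 : ‖z‖ = |z.re| := by rw [h1]; simp [Complex.norm_real]
      have h4 := h2.trans hd1
      rw [h3] at h4
      nlinarith [abs_nonneg z.re, le_abs_self z.re, neg_abs_le z.re]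
    have hstar : ∀ z : ℂ, star (f z) =
        (z.re : ℂ) - Complex.I * (Real.sqrt (1 - z.re ^ 2) : ℝ) := by
      intro z
      simp only [hf, RCLike.star_def, map_add, map_mul, Complex.conj_ofReal, Complex.conj_I]
      ring
    have hu : cfc f d ∈ unitary C := by
      rw [cfc_unitary_iff f d (hf := hfc.continuousOn)]
      intro z hz
      have hzsq := hsq z hz
      have hs : (Real.sqrt (1 - z.re ^ 2)) ^ 2 = 1 - z.re ^ 2 :=
        Real.sq_sqrt (by linarith)
      have hs' : ((Real.sqrt (1 - z.re ^ 2) : ℝ) : ℂ) ^ 2 = 1 - (z.re : ℂ) ^ 2 := by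
        rw [← Complex.ofReal_pow, hs]; push_cast; ring
      rw [hstar z]
      show ((z.re : ℂ) - Complex.I * _) * ((z.re : ℂ) + Complex.I * _) = 1
      linear_combination hs' - ((Real.sqrt (1 - z.re ^ 2) : ℝ) : ℂ) ^ 2 * Complex.I_sq
    -- now  d = (1/2) • (u + star u)
    have hadd : cfc f d + star (cfc f d) = (2 : ℂ) • d := by
      rw [← cfc_star f d, ← cfc_add (a := d) f _ hfc.continuousOn (by fun_prop)]
      have heq : cfc (fun z => f z + star (f z)) d = cfc ((2 : ℂ) * ·) d := by
        apply cfc_congr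
        intro z hz
        have h1 : z = (z.re : ℂ) := hd.mem_spectrum_eq_re hz
        show f z + star (f z) = 2 * z
        rw [hstar z, hf]
        simp only []
        linear_combination (-2 : ℂ) * h1
      rw [heq, cfc_const_mul_id (2 : ℂ) d]
    have h2 : d = (2⁻¹ : ℂ) • (cfc f d + star (cfc f d)) := by
      rw [hadd, smul_smul]; norm_num
    rw [h2]
    exact Submodule.smul_mem _ _ (Submodule.add_mem _
      (Submodule.subset_span hu)
      (Submodule.subset_span (Unitary.star_mem hu)))
  have hsa' : ∀ c : C, IsSelfAdjoint c → c ∈ S := by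
    intro c hc
    rcases eq_or_ne c 0 with rfl | hc0
    · exact Submodule.zero_mem _
    · have hn : (0 : ℝ) < ‖c‖ := norm_pos_iff.mpr hc0
      have hrs : star ((‖c‖⁻¹ : ℝ) : ℂ) = ((‖c‖⁻¹ : ℝ) : ℂ) := by
        rw [RCLike.star_def, Complex.conj_ofReal]
      have hcc : c = ((‖c‖ : ℝ) : ℂ) • (((‖c‖⁻¹ : ℝ) : ℂ) • c) := by
        rw [smul_smul, ← Complex.ofReal_mul, mul_inv_cancel₀ hn.ne']
        simp
      rw [hcc]
      refine Submodule.smul_mem _ _ (hsa _ (IsSelfAdjoint.smul hrs hc) ?_)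
      rw [norm_smul]
      simp only [Complex.norm_real, norm_inv, norm_norm]
      rw [inv_mul_cancel₀ hn.ne']
  have hdecomp : b = (realPart b : C) + Complex.I • (imaginaryPart b : C) :=
    (realPart_add_I_smul_imaginaryPart b).symm
  rw [hdecomp]
  exact Submodule.add_mem _ (hsa' _ (realPart b).prop)
    (Submodule.smul_mem _ _ (hsa' _ (imaginaryPart b).prop))

end UnitarySpan

section Avg

variable {A : Type*} [CStarAlgebra A] (B : StarSubalgebra ℂ A) [FiniteDimensional ℂ B]

namespace Stmt10Aux

instance : IsClosed (B : Set A) := by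
  have : FiniteDimensional ℂ B.toSubmodule := ‹FiniteDimensional ℂ B›
  exact B.toSubmodule.closed_of_finiteDimensional

instance : IsTopologicalGroup (unitary B) where
  continuous_mul := by
    apply Continuous.subtype_mk
    exact (continuous_subtype_val.comp continuous_fst).mul
      (continuous_subtype_val.comp continuous_snd)
  continuous_inv := by
    apply Continuous.subtype_mk
    exact continuous_star.comp continuous_subtype_val

instance : CompactSpace (unitary B) := by
  haveI : ProperSpace B := FiniteDimensional.proper ℂ B
  have h : IsCompact ((unitary B : Set B)) := by
    apply Metric.isCompact_of_isClosed_isBounded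
    · have : (unitary B : Set B) = {u : B | star u * u = 1} ∩ {u : B | u * star u = 1} := by
        ext u; exact Iff.rfl
      rw [this]
      exact (isClosed_eq ((continuous_star).mul continuous_id) continuous_const).inter
        (isClosed_eq ((continuous_id).mul continuous_star) continuous_const)
    · apply Bornology.IsBounded.subset
        (Metric.isBounded_closedBall (x := (0 : B)) (r := max 1 ‖(1 : B)‖))
      intro u hu
      rw [Metric.mem_closedBall, dist_zero_right]
      have h1 : ‖u‖ * ‖u‖ = ‖(1 : B)‖ := by
        rw [← CStarRing.norm_star_mul_self, hu.1]
      rcases le_or_gt ‖u‖ 1 with h | h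
      · exact le_max_of_le_left h
      · refine le_max_of_le_right ?_
        nlinarith [norm_nonneg u]
  rwa [isCompact_iff_compactSpace] at h

noncomputable instance : MeasurableSpace (unitary B) := borel _
instance : BorelSpace (unitary B) := ⟨rfl⟩

instance : SecondCountableTopology (unitary B) := by
  haveI : ProperSpace B := FiniteDimensional.proper ℂ B
  haveI : SecondCountableTopology B := secondCountable_of_proper
  infer_instance

noncomputable def K0 : TopologicalSpace.PositiveCompacts (unitary B) :=
  ⟨⟨Set.univ, isCompact_univ⟩, by simp [interior_univ]⟩

noncomputable def mu : Measure (unitary B) := Measure.haarMeasure (K0 B)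

instance : IsProbabilityMeasure (mu B) :=
  ⟨show Measure.haarMeasure (K0 B) ((K0 B) : Set (unitary B)) = 1 from
    Measure.haarMeasure_self⟩

instance : (mu B).IsMulLeftInvariant := Measure.isMulLeftInvariant_haarMeasure _

/-- Coercion of a unitary of `B` into `A`. -/
def uc (u : unitary B) : A := ((u : B) : A)

lemma uc_mem_B (u : unitary B) : uc B u ∈ B := (u : B).prop

lemma uc_mem_unitary (u : unitary B) : uc B u ∈ unitary A := by
  have h1 := congrArg (Subtype.val : B → A) u.prop.1
  have h2 := congrArg (Subtype.val : B → A) u.prop.2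
  push_cast at h1 h2
  exact ⟨h1, h2⟩

lemma uc_mul (u v : unitary B) : uc B (u * v) = uc B u * uc B v := rfl

lemma uc_one : uc B 1 = 1 := rfl

lemma continuous_uc : Continuous (uc B) :=
  continuous_subtype_val.comp continuous_subtype_val

/-- The integrand `u a u*`. -/
def integrand (a : A) (u : unitary B) : A := uc B u * a * star (uc B u)

lemma continuous_integrand (a : A) : Continuous (integrand B a) :=
  ((continuous_uc B).mul continuous_const).mul ((continuous_uc B).star)

lemma norm_integrand (a : A) (u : unitary B) : ‖integrand B a u‖ = ‖a‖ := by
  unfold integrand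
  rw [CStarRing.norm_mul_mem_unitary _ (Unitary.star_mem (uc_mem_unitary B u)),
    CStarRing.norm_mem_unitary_mul _ (uc_mem_unitary B u)]

lemma integrable_integrand (a : A) : Integrable (integrand B a) (mu B) :=
  (continuous_integrand B a).integrable_of_hasCompactSupport
    (IsClosed.isCompact (isClosed_tsupport _))

/-- The averaging operator. -/
noncomputable def E0 (a : A) : A := ∫ u, integrand B a u ∂(mu B)

lemma E0_norm_le (a : A) : ‖E0 B a‖ ≤ ‖a‖ := by
  have := norm_integral_le_of_norm_le_const (μ := mu B)
    (f := integrand B a) (C := ‖a‖)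
    (Filter.Eventually.of_forall fun u => le_of_eq (norm_integrand B a u))
  simpa [E0] using this

lemma E0_add (a b : A) : E0 B (a + b) = E0 B a + E0 B b := by
  unfold E0
  rw [← integral_add (integrable_integrand B a) (integrable_integrand B b)]
  congr 1
  ext u
  unfold integrand
  noncomm_ring

lemma E0_smul (c : ℂ) (a : A) : E0 B (c • a) = c • E0 B a := by
  unfold E0
  rw [← integral_smul]
  congr 1
  ext u
  unfold integrand
  rw [mul_smul_comm, smul_mul_assoc]

lemma E0_const (x : A) (hx : ∀ u : unitary B, integrand B x u = x) : E0 B x = x := by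
  unfold E0
  rw [show (fun u => integrand B x u) = fun _ => x from funext hx]
  simp [integral_const]

lemma E0_one : E0 B 1 = 1 := by
  apply E0_const
  intro u
  unfold integrand
  rw [mul_one]
  exact (uc_mem_unitary B u).2

/-- Conjugation invariance of the average. -/
lemma E0_conj (a : A) (v : unitary B) :
    uc B v * E0 B a * star (uc B v) = E0 B a := by
  let L : A →L[ℂ] A :=
    (ContinuousLinearMap.mul ℂ A (uc B v)).comp
      ((ContinuousLinearMap.mul ℂ A).flip (star (uc B v)))
  have hL : ∀ x : A, L x = uc B v * x * star (uc B v) := by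
    intro x
    simp only [L, ContinuousLinearMap.comp_apply, ContinuousLinearMap.flip_apply,
      ContinuousLinearMap.mul_apply']
    rw [mul_assoc]
  have h1 : uc B v * E0 B a * star (uc B v) = L (E0 B a) := (hL _).symm
  rw [h1]
  unfold E0
  rw [← L.integral_comp_comm (integrable_integrand B a)]
  have h2 : (fun u => L (integrand B a u)) = fun u => integrand B a (v * u) := by
    ext u
    rw [hL]
    simp only [integrand, uc_mul, star_mul]
    noncomm_ring
  rw [h2]
  exact integral_mul_left_eq_self (integrand B a) v

lemma E0_comm_unitary (a : A) (v : unitary B) :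
    uc B v * E0 B a = E0 B a * uc B v := by
  have h := (uc_mem_unitary B v).1
  calc uc B v * E0 B a = uc B v * E0 B a * (star (uc B v) * uc B v) := by
        rw [h, mul_one]
    _ = (uc B v * E0 B a * star (uc B v)) * uc B v := by noncomm_ring
    _ = E0 B a * uc B v := by rw [E0_conj]

lemma E0_comm [Nontrivial A] (a : A) {b : A} (hb : b ∈ B) :
    b * E0 B a = E0 B a * b := by
  haveI : Nontrivial B :=
    ⟨⟨0, 1, fun h => zero_ne_one (α := A) (by simpa using congrArg (Subtype.val) h)⟩⟩
  have key : ∀ x : B, (x : A) * E0 B a = E0 B a * (x : A) := by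
    intro x
    have hx := mem_span_unitary x
    induction hx using Submodule.span_induction with
    | mem u hu => exact E0_comm_unitary B a ⟨u, hu⟩
    | zero => simp
    | add x y _ _ hx hy => push_cast; rw [add_mul, mul_add, hx, hy]
    | smul c x _ hx => push_cast; rw [smul_mul_assoc, mul_smul_comm, hx]
  exact key ⟨b, hb⟩

lemma E0_central (x : A) (hx : ∀ b ∈ B, b * x = x * b) : E0 B x = x := by
  apply E0_const
  intro u
  unfold integrand
  rw [hx (uc B u) (uc_mem_B B u), mul_assoc, (uc_mem_unitary B u).2, mul_one]

end Stmt10Aux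

end Avg

open Stmt10Aux

/-- Let `A` be a unital C*-algebra and `B ⊆ A` a finite-dimensional unital
C*-subalgebra.  Then averaging over the compact unitary group `U(B)` with respect to its
normalized Haar measure yields a conditional expectation `E_B : A → B' ∩ A`, i.e. a norm-one
unital linear projection onto the relative commutant `B' ∩ A` whose values lie in the closed
convex hull of `{u a u* : u ∈ U(B)}`, satisfying
`‖a - E_B a‖ ≤ max_{x ∈ Ball(B)} ‖a x - x a‖` for all `a ∈ A`. -/
theorem stmt10 {A : Type*} [CStarAlgebra A]
    (B : StarSubalgebra ℂ A) (hB : FiniteDimensional ℂ B) :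
    ∃ E : A →L[ℂ] A, ‖E‖ ≤ 1 ∧ E 1 = 1 ∧
      (∀ a : A, ∀ b ∈ B, b * E a = E a * b) ∧
      (∀ x : A, (∀ b ∈ B, b * x = x * b) → E x = x) ∧
      (∀ a : A, E a ∈ closure (convexHull ℝ
        {y : A | ∃ u : A, u ∈ B ∧ u ∈ unitary A ∧ y = u * a * star u})) ∧
      (∀ (a : A) (M : ℝ), (∀ x ∈ B, ‖x‖ ≤ 1 → ‖a * x - x * a‖ ≤ M) → ‖a - E a‖ ≤ M) := by
  rcases subsingleton_or_nontrivial A with hA | hA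
  · refine ⟨0, by simp, Subsingleton.elim _ _, fun a b _ => Subsingleton.elim _ _,
      fun x _ => Subsingleton.elim _ _, ?_, ?_⟩
    · intro a
      refine subset_closure (subset_convexHull ℝ _ ?_)
      exact Subsingleton.elim ((0 : A →L[ℂ] A) a) (1 * a * star 1) ▸
        ⟨1, one_mem B, one_mem (unitary A), rfl⟩
    · intro a M hM
      have h0 : (0 : ℝ) ≤ M := by
        have := hM 1 (one_mem B) (by rw [Subsingleton.elim (1 : A) 0, norm_zero]; norm_num)
        calc (0:ℝ) = ‖a * 1 - 1 * a‖ := by rw [Subsingleton.elim (a * 1 - 1 * a) 0, norm_zero]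
        _ ≤ M := this
      rw [Subsingleton.elim (a - (0 : A →L[ℂ] A) a) 0, norm_zero]
      exact h0
  · haveI := hB
    refine ⟨LinearMap.mkContinuous
      { toFun := E0 B, map_add' := E0_add B, map_smul' := E0_smul B } 1
      (fun a => by rw [one_mul]; exact E0_norm_le B a), ?_, ?_, ?_, ?_, ?_, ?_⟩
    · exact LinearMap.mkContinuous_norm_le _ zero_le_one _
    · exact E0_one B
    · intro a b hb
      exact E0_comm B a hb
    · intro x hx
      exact E0_central B x hx
    · intro a
      refine Convex.integral_mem (μ := mu B) ((convex_convexHull ℝ _).closure)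
        isClosed_closure (Filter.Eventually.of_forall fun u => ?_)
        (integrable_integrand B a)
      exact subset_closure (subset_convexHull ℝ _
        ⟨uc B u, uc_mem_B B u, uc_mem_unitary B u, rfl⟩)
    · intro a M hM
      have key : ∀ u : unitary B, ‖a - integrand B a u‖ ≤ M := by
        intro u
        have hdiff : a - integrand B a u = (a * uc B u - uc B u * a) * star (uc B u) := by
          have h := (uc_mem_unitary B u).2
          calc a - integrand B a u
              = a * (uc B u * star (uc B u)) - uc B u * a * star (uc B u) := by
                rw [h, mul_one]; rfl
            _ = (a * uc B u - uc B u * a) * star (uc B u) := by noncomm_ring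
        rw [hdiff, CStarRing.norm_mul_mem_unitary _
          (Unitary.star_mem (uc_mem_unitary B u))]
        exact hM (uc B u) (uc_mem_B B u)
          (le_of_eq (CStarRing.norm_of_mem_unitary (uc_mem_unitary B u)))
      have hsub : a - E0 B a = ∫ u, (a - integrand B a u) ∂(mu B) := by
        rw [integral_sub (integrable_const a) (integrable_integrand B a)]
        simp only [integral_const, measure_univ, probReal_univ, ENNReal.toReal_one, one_smul]
        rfl
      show ‖a - E0 B a‖ ≤ M
      rw [hsub]
      have := norm_integral_le_of_norm_le_const (μ := mu B)
        (f := fun u => a - integrand B a u) (C := M)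
        (Filter.Eventually.of_forall key)
      simpa using this
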